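/- arXiv:1608.02032 — 2 statements merged into one kernel-verified Lean document; each statement's English description precedes it below -/
import Mathlib

section
/- With r_opt(μ) = (1 + W(μ(μ+2)e^{-1}))/(2μ + 2), where W is the principal Lambert W-function, the function μ ↦ r_opt(μ) is strictly decreasing on (0, ∞) and r_opt(μ) → 1/2 as μ → 0⁺. -/
private lemma keyMono : StrictMonoOn
    (fun w : ℝ => (1 + w * Real.exp (w + 1)) / (1 + w) ^ 2) (Set.Ici 0) := by
  apply strictMonoOn_of_deriv_pos (convex_Ici 0)
  · apply ContinuousOn.div
    · fun_prop
    · fun_prop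
    · intro x hx
      simp only [Set.mem_Ici] at hx
      positivity
  · intro x hx
    rw [interior_Ici, Set.mem_Ioi] at hx
    have he : HasDerivAt (fun w : ℝ => Real.exp (w + 1)) (Real.exp (x + 1)) x := by
      simpa [Function.comp_def] using (Real.hasDerivAt_exp (x + 1)).comp x ((hasDerivAt_id x).add_const 1)
    have h1 : HasDerivAt (fun w : ℝ => 1 + w * Real.exp (w + 1))
        (1 * Real.exp (x + 1) + x * Real.exp (x + 1)) x :=
      (((hasDerivAt_id x).mul he)).const_add 1
    have h2 : HasDerivAt (fun w : ℝ => (1 + w) ^ 2) (2 * (1 + x)) x := by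
      have := ((hasDerivAt_id x).const_add 1).pow 2
      simpa [Pi.pow_def] using this
    have hne : ((1 + x) ^ 2 : ℝ) ≠ 0 := by positivity
    have hdiv := (h1.div h2 hne)
    rw [show (fun w : ℝ => (1 + w * Real.exp (w + 1)) / (1 + w) ^ 2) = ((fun w => 1 + w * Real.exp (w + 1)) / fun w => (1 + w) ^ 2) from rfl, hdiv.deriv]
    have hE := Real.add_one_le_exp (x + 1)
    apply div_pos
    · have hnum : (1 * Real.exp (x + 1) + x * Real.exp (x + 1)) * (1 + x) ^ 2 -
          (1 + x * Real.exp (x + 1)) * (2 * (1 + x)) =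
          (1 + x) * ((1 + x ^ 2) * Real.exp (x + 1) - 2) := by ring
      rw [hnum]
      apply mul_pos (by linarith)
      nlinarith [sq_nonneg x, mul_nonneg (sq_nonneg x) (by linarith : (0:ℝ) ≤ Real.exp (x+1))]
    · positivity

private lemma Wle (W : ℝ → ℝ)
    (hW : ∀ x : ℝ, 0 ≤ x → 0 ≤ W x ∧ W x * Real.exp (W x) = x)
    {x : ℝ} (hx : 0 ≤ x) : W x ≤ x := by
  obtain ⟨h0, he⟩ := hW x hx
  nlinarith [Real.add_one_le_exp (W x)]

theorem ropt_antitone_and_limit (W : ℝ → ℝ)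
    (hW : ∀ x : ℝ, 0 ≤ x → 0 ≤ W x ∧ W x * Real.exp (W x) = x) :
    StrictAntiOn (fun μ : ℝ => (1 + W (μ * (μ + 2) * Real.exp (-1))) / (2 * μ + 2))
      (Set.Ioi 0) ∧
    Filter.Tendsto (fun μ : ℝ => (1 + W (μ * (μ + 2) * Real.exp (-1))) / (2 * μ + 2))
      (nhdsWithin 0 (Set.Ioi 0)) (nhds (1 / 2)) := by
  have hexp : Real.exp (-1) * Real.exp 1 = 1 := by
    rw [← Real.exp_add]; simp
  constructor
  · intro a ha b hb hab
    simp only [Set.mem_Ioi] at ha hb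
    have hxa : (0:ℝ) ≤ a * (a + 2) * Real.exp (-1) := by positivity
    have hxb : (0:ℝ) ≤ b * (b + 2) * Real.exp (-1) := by positivity
    obtain ⟨hwa0, hwae⟩ := hW _ hxa
    obtain ⟨hwb0, hwbe⟩ := hW _ hxb
    set wa := W (a * (a + 2) * Real.exp (-1)) with hwa
    set wb := W (b * (b + 2) * Real.exp (-1)) with hwb
    -- wa < wb
    have hlt : wa < wb := by
      by_contra h
      push_neg at h
      have h1 : wb * Real.exp wb ≤ wa * Real.exp wa := by
        have := Real.exp_le_exp.mpr h
        nlinarith [Real.exp_pos wb]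
      rw [hwae, hwbe] at h1
      have h2 := (mul_le_mul_iff_of_pos_right (Real.exp_pos (-1))).mp h1
      nlinarith
    -- wa * exp (wa + 1) = a*(a+2)
    have ea : wa * Real.exp (wa + 1) = a * (a + 2) := by
      rw [Real.exp_add]
      calc wa * (Real.exp wa * Real.exp 1) = wa * Real.exp wa * Real.exp 1 := by ring
        _ = a * (a + 2) * Real.exp (-1) * Real.exp 1 := by rw [hwae]
        _ = a * (a + 2) := by rw [mul_assoc, hexp, mul_one]
    have eb : wb * Real.exp (wb + 1) = b * (b + 2) := by
      rw [Real.exp_add]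
      calc wb * (Real.exp wb * Real.exp 1) = wb * Real.exp wb * Real.exp 1 := by ring
        _ = b * (b + 2) * Real.exp (-1) * Real.exp 1 := by rw [hwbe]
        _ = b * (b + 2) := by rw [mul_assoc, hexp, mul_one]
    have key := keyMono (Set.mem_Ici.mpr hwa0) (Set.mem_Ici.mpr hwb0) hlt
    simp only [ea, eb] at key
    -- key : (1 + a*(a+2))/(1+wa)^2 < (1 + b*(b+2))/(1+wb)^2
    have hpa : (0:ℝ) < (1 + wa) ^ 2 := by positivity
    have hpb : (0:ℝ) < (1 + wb) ^ 2 := by positivity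
    rw [div_lt_div_iff₀ hpa hpb] at key
    -- key : (1 + a*(a+2)) * (1+wb)^2 < (1 + b*(b+2)) * (1+wa)^2
    have key2 : ((a + 1) * (1 + wb)) ^ 2 < ((b + 1) * (1 + wa)) ^ 2 := by
      nlinarith
    have hcross : (a + 1) * (1 + wb) < (b + 1) * (1 + wa) := by
      nlinarith [mul_pos (by linarith : (0:ℝ) < a + 1) (by linarith : (0:ℝ) < 1 + wb),
        mul_pos (by linarith : (0:ℝ) < b + 1) (by linarith : (0:ℝ) < 1 + wa)]
    show (1 + wb) / (2 * b + 2) < (1 + wa) / (2 * a + 2)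
    rw [div_lt_div_iff₀ (by linarith) (by linarith)]
    nlinarith
  · have hWlim : Filter.Tendsto (fun μ : ℝ => W (μ * (μ + 2) * Real.exp (-1)))
        (nhdsWithin 0 (Set.Ioi 0)) (nhds 0) := by
      have hx : Filter.Tendsto (fun μ : ℝ => μ * (μ + 2) * Real.exp (-1))
          (nhdsWithin 0 (Set.Ioi 0)) (nhds 0) := by
        have hc : Continuous (fun μ : ℝ => μ * (μ + 2) * Real.exp (-1)) := by continuity
        have : Filter.Tendsto (fun μ : ℝ => μ * (μ + 2) * Real.exp (-1)) (nhds 0)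
            (nhds (0 * (0 + 2) * Real.exp (-1))) := hc.tendsto 0
        simpa using this.mono_left nhdsWithin_le_nhds
      apply squeeze_zero' ?_ ?_ hx
      · filter_upwards [self_mem_nhdsWithin] with μ hμ
        simp only [Set.mem_Ioi] at hμ
        exact (hW _ (by positivity)).1
      · filter_upwards [self_mem_nhdsWithin] with μ hμ
        simp only [Set.mem_Ioi] at hμ
        exact Wle W hW (by positivity)
    have hnum : Filter.Tendsto (fun μ : ℝ => 1 + W (μ * (μ + 2) * Real.exp (-1)))
        (nhdsWithin 0 (Set.Ioi 0)) (nhds 1) := by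
      simpa using (tendsto_const_nhds.add hWlim)
    have hden : Filter.Tendsto (fun μ : ℝ => 2 * μ + 2)
        (nhdsWithin 0 (Set.Ioi 0)) (nhds 2) := by
      have hc : Continuous (fun μ : ℝ => 2 * μ + 2) := by continuity
      have : Filter.Tendsto (fun μ : ℝ => 2 * μ + 2) (nhds 0) (nhds (2 * 0 + 2)) :=
        hc.tendsto 0
      simpa using this.mono_left nhdsWithin_le_nhds
    have := hnum.div hden (by norm_num)
    exact this
end

section
/- For all μ, r > 0, p¹(μ, r) := (μ·e^{-2r}·(μ + 2r + 2rμ) - μ²·e^{-2r(2+μ)}) / (1+μ)² ≥ e^{-2r}·(1 - e^{-2μr}). -/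
noncomputable def p1 (μ r : ℝ) : ℝ :=
  (μ * Real.exp (-(2 * r)) * (μ + 2 * r + 2 * r * μ)
    - μ ^ 2 * Real.exp (-(2 * r * (2 + μ)))) / (1 + μ) ^ 2

lemma key_convex (m s : ℝ) (hm : 0 < m) :
    (1 + m) * Real.exp (-(m * s)) ≤ 1 + m * Real.exp (-((1 + m) * s)) := by
  have hm1 : (0:ℝ) < 1 + m := by linarith
  have ha : (0:ℝ) ≤ 1 / (1 + m) := by positivity
  have hb : (0:ℝ) ≤ m / (1 + m) := by positivity
  have hab : 1 / (1 + m) + m / (1 + m) = 1 := by field_simp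
  have h := convexOn_exp.2 (Set.mem_univ (0:ℝ)) (Set.mem_univ (-((1 + m) * s))) ha hb hab
  simp only [smul_eq_mul, mul_zero, zero_add, Real.exp_zero, mul_one] at h
  have heq : m / (1 + m) * -((1 + m) * s) = -(m * s) := by field_simp
  rw [heq] at h
  have h2 : (1 + m) * Real.exp (-(m * s)) ≤ (1 + m) * (1 / (1 + m) + m / (1 + m) * Real.exp (-((1 + m) * s))) :=
    mul_le_mul_of_nonneg_left h (le_of_lt hm1)
  calc (1 + m) * Real.exp (-(m * s)) ≤ (1 + m) * (1 / (1 + m) + m / (1 + m) * Real.exp (-((1 + m) * s))) := h2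
    _ = 1 + m * Real.exp (-((1 + m) * s)) := by field_simp

lemma g_mono (m : ℝ) (hm : 0 < m) :
    MonotoneOn (fun s => (1 + m) ^ 2 * Real.exp (-(m * s)) - m ^ 2 * Real.exp (-((1 + m) * s)) + m * (1 + m) * s)
      (Set.Ici (0:ℝ)) := by
  have hd : ∀ s : ℝ, HasDerivAt (fun s => (1 + m) ^ 2 * Real.exp (-(m * s)) - m ^ 2 * Real.exp (-((1 + m) * s)) + m * (1 + m) * s)
      ((1 + m) ^ 2 * (Real.exp (-(m * s)) * (-m)) - m ^ 2 * (Real.exp (-((1 + m) * s)) * (-(1 + m))) + m * (1 + m)) s := by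
    intro s
    have h1 : HasDerivAt (fun s : ℝ => -(m * s)) (-m) s := by
      have := ((hasDerivAt_id s).const_mul m).neg
      convert this using 1 <;> first | (ext; simp) | simp
    have h2 : HasDerivAt (fun s : ℝ => -((1 + m) * s)) (-(1 + m)) s := by
      have := ((hasDerivAt_id s).const_mul (1 + m)).neg
      convert this using 1 <;> first | (ext; simp) | simp
    have h1e := h1.exp
    have h2e := h2.exp
    have := ((h1e.const_mul ((1 + m) ^ 2)).sub (h2e.const_mul (m ^ 2))).add
      (((hasDerivAt_id s).const_mul (m * (1 + m))))
    convert this using 1 <;> first | (ext; simp) | simp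
  apply monotoneOn_of_deriv_nonneg (convex_Ici 0)
  · exact (Continuous.continuousOn (by continuity))
  · intro s _
    exact (hd s).differentiableAt.differentiableWithinAt
  · intro s hs
    rw [(hd s).deriv]
    have hk := key_convex m s hm
    nlinarith [Real.exp_pos (-(m * s)), Real.exp_pos (-((1 + m) * s))]

theorem p1_lower_bound (μ r : ℝ) (hμ : 0 < μ) (hr : 0 < r) :
    Real.exp (-(2 * r)) * (1 - Real.exp (-(2 * μ * r))) ≤ p1 μ r := by
  have hm1 : (0:ℝ) < 1 + μ := by linarith
  have hg := g_mono μ hμ (Set.self_mem_Ici) (Set.mem_Ici.mpr (by linarith : (0:ℝ) ≤ 2 * r)) (by linarith : (0:ℝ) ≤ 2 * r)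
  simp only [mul_zero, neg_zero, Real.exp_zero, mul_one] at hg
  -- hg : (1+μ)^2 - μ^2 + 0 ≤ (1+μ)^2 * exp(-(μ*(2r))) - μ^2 * exp(-((1+μ)*(2r))) + μ*(1+μ)*(2r)
  have hexp1 : Real.exp (-(2 * μ * r)) = Real.exp (-(μ * (2 * r))) := by ring_nf
  have hexp2 : Real.exp (-(2 * r * (2 + μ))) = Real.exp (-(2 * r)) * Real.exp (-((1 + μ) * (2 * r))) := by
    rw [← Real.exp_add]; ring_nf
  rw [p1, hexp2, hexp1]
  rw [le_div_iff₀ (by positivity : (0:ℝ) < (1 + μ) ^ 2)]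
  have he := Real.exp_pos (-(2 * r))
  nlinarith [mul_le_mul_of_nonneg_left hg (le_of_lt he)]
end
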